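/- Let b, b' : ℝ^d → ℝ^d be C¹ vector fields and Σ, Σ' : ℝ^d → ℝ^{d×d} be C² matrix-valued maps, and let p' : ℝ^d → ℝ be a C² everywhere-positive function. Define the Fokker–Planck operators A u = −∑_i ∂_{x_i}(b_i u) + (1/2) ∑_{i,j} ∂²_{x_i x_j}(Σ_{ij} u) and A' u likewise with b', Σ'. Set h_i = b_i − (1/2) ∑_j ∂_{x_j} Σ_{ij}, h'_i = b'_i − (1/2) ∑_j ∂_{x_j} Σ'_{ij}, and Φ = (1/2)(Σ' − Σ)∇p'/p' − (h' − h). Then for every x ∈ ℝ^d, (A' p')(x) = (A p')(x) + ∇·(Φ p')(x), where ∇·G = ∑_i ∂_{x_i} G_i denotes the divergence of a vector field G. -/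

import Mathlib

noncomputable section

open MeasureTheory

/-- `ℝ^d` with the Euclidean structure. -/
abbrev Euc (d : ℕ) := EuclideanSpace ℝ (Fin d)

/-- Partial derivative `∂_{x_i} f` of a scalar function on `ℝ^d`. -/
def pd {d : ℕ} (i : Fin d) (f : Euc d → ℝ) (x : Euc d) : ℝ :=
  fderiv ℝ f x (EuclideanSpace.single i 1)

/-- Divergence `∇·G = ∑ i ∂_{x_i} G_i` of a vector field on `ℝ^d`. -/
def diverg {d : ℕ} (G : Euc d → Euc d) (x : Euc d) : ℝ :=
  ∑ i, pd i (fun y => G y i) x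

/-- The Fokker–Planck operator
`A u = −∑_i ∂_{x_i}(b_i u) + (1/2) ∑_{i,j} ∂²_{x_i x_j}(Σ_{ij} u)`. -/
def FPop {d : ℕ} (b : Euc d → Euc d) (S : Euc d → Matrix (Fin d) (Fin d) ℝ)
    (u : Euc d → ℝ) (x : Euc d) : ℝ :=
  -(∑ i, pd i (fun y => b y i * u y) x)
    + (1 / 2) * ∑ i, ∑ j, pd i (fun y => pd j (fun z => S z i j * u z) y) x

/-- `h_i = b_i − (1/2) ∑_j ∂_{x_j} Σ_{ij}`. -/
def hVec {d : ℕ} (b : Euc d → Euc d) (S : Euc d → Matrix (Fin d) (Fin d) ℝ)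
    (x : Euc d) : Euc d :=
  WithLp.toLp 2 fun i => b x i - (1 / 2) * ∑ j, pd j (fun y => S y i j) x

/-- `Φ = (1/2)(Σ' − Σ)∇p'/p' − (h' − h)`. -/
def PhiVec {d : ℕ} (b b' : Euc d → Euc d)
    (S S' : Euc d → Matrix (Fin d) (Fin d) ℝ) (p' : Euc d → ℝ) (x : Euc d) : Euc d :=
  WithLp.toLp 2 fun i =>
    (1 / 2) * (∑ j, (S' x i j - S x i j) * pd j p' x) / p' x
      - (hVec b' S' x i - hVec b S x i)

lemma pd_sub' {d : ℕ} {f g : Euc d → ℝ} {x : Euc d} (i : Fin d)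
    (hf : DifferentiableAt ℝ f x) (hg : DifferentiableAt ℝ g x) :
    pd i (fun y => f y - g y) x = pd i f x - pd i g x := by
  simp [pd, fderiv_fun_sub hf hg]

lemma pd_mul' {d : ℕ} {f g : Euc d → ℝ} {x : Euc d} (i : Fin d)
    (hf : DifferentiableAt ℝ f x) (hg : DifferentiableAt ℝ g x) :
    pd i (fun y => f y * g y) x = f x * pd i g x + g x * pd i f x := by
  simp [pd, fderiv_fun_mul hf hg]

lemma pd_const_mul' {d : ℕ} {f : Euc d → ℝ} {x : Euc d} (i : Fin d) (c : ℝ)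
    (hf : DifferentiableAt ℝ f x) :
    pd i (fun y => c * f y) x = c * pd i f x := by
  simp [pd, fderiv_const_mul hf c]

lemma pd_sum' {d n : ℕ} {f : Fin n → Euc d → ℝ} {x : Euc d} (i : Fin d)
    (hf : ∀ j, DifferentiableAt ℝ (f j) x) :
    pd i (fun y => ∑ j, f j y) x = ∑ j, pd i (f j) x := by
  simp [pd, fderiv_fun_sum (fun j _ => hf j)]

lemma contDiff_pd' {d : ℕ} {f : Euc d → ℝ} (hf : ContDiff ℝ 2 f) (j : Fin d) :
    ContDiff ℝ 1 (pd j f) := by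
  have h : ContDiff ℝ 1 (fderiv ℝ f) := by
    apply ContDiff.fderiv_right hf
    norm_num
  exact h.clm_apply contDiff_const

/-- Fokker–Planck operator comparison identity (Lemma 2.1):
`A' p' = A p' + ∇·(Φ p')`. -/
theorem fokker_planck_operator_comparison {d : ℕ}
    (b b' : Euc d → Euc d)
    (hb : ∀ i, ContDiff ℝ 1 fun x => b x i)
    (hb' : ∀ i, ContDiff ℝ 1 fun x => b' x i)
    (S S' : Euc d → Matrix (Fin d) (Fin d) ℝ)
    (hS : ∀ i j, ContDiff ℝ 2 fun x => S x i j)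
    (hS' : ∀ i j, ContDiff ℝ 2 fun x => S' x i j)
    (p' : Euc d → ℝ) (hp' : ContDiff ℝ 2 p') (hp'pos : ∀ x, 0 < p' x) :
    ∀ x : Euc d,
      FPop b' S' p' x =
        FPop b S p' x + diverg (fun y => p' y • PhiVec b b' S S' p' y) x := by
  intro x
  have hp1 : Differentiable ℝ p' := hp'.differentiable two_ne_zero
  have hSd : ∀ i j, Differentiable ℝ (fun z => S z i j) :=
    fun i j => (hS i j).differentiable two_ne_zero
  have hS'd : ∀ i j, Differentiable ℝ (fun z => S' z i j) :=
    fun i j => (hS' i j).differentiable two_ne_zero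
  have hSp : ∀ i j, ContDiff ℝ 2 (fun z => S z i j * p' z) := fun i j => (hS i j).mul hp'
  have hS'p : ∀ i j, ContDiff ℝ 2 (fun z => S' z i j * p' z) := fun i j => (hS' i j).mul hp'
  have hDp : ∀ i j, ContDiff ℝ 2 (fun z => (S' z i j - S z i j) * p' z) :=
    fun i j => ((hS' i j).sub (hS i j)).mul hp'
  -- pointwise identity for p' • Φ
  have key : ∀ (i : Fin d) (y : Euc d),
      (p' y • PhiVec b b' S S' p' y) i =
        (1 / 2) * ∑ j, pd j (fun z => (S' z i j - S z i j) * p' z) y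
          - (b' y i - b y i) * p' y := by
    intro i y
    have hne : p' y ≠ 0 := (hp'pos y).ne'
    have hprod : ∀ j : Fin d, pd j (fun z => (S' z i j - S z i j) * p' z) y
        = (S' y i j - S y i j) * pd j p' y
          + p' y * (pd j (fun z => S' z i j) y - pd j (fun z => S z i j) y) := by
      intro j
      have h1 := pd_mul' j (((hS'd i j).fun_sub (hSd i j)) y) (hp1 y)
      have h2 := pd_sub' j (hS'd i j y) (hSd i j y)
      simp only [h1, h2]
    simp only [PiLp.smul_apply, smul_eq_mul, PhiVec, hVec]
    simp only [hprod, Finset.sum_add_distrib, ← Finset.mul_sum, Finset.sum_sub_distrib]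
    field_simp
    ring
  -- divergence expansion
  have hdiv : diverg (fun y => p' y • PhiVec b b' S S' p' y) x
      = ∑ i, ((1 / 2) * ∑ j,
            pd i (fun y => pd j (fun z => (S' z i j - S z i j) * p' z) y) x
          - pd i (fun y => (b' y i - b y i) * p' y) x) := by
    unfold diverg
    refine Finset.sum_congr rfl fun i _ => ?_
    have hfe : (fun y => (p' y • PhiVec b b' S S' p' y) i)
        = fun y => (1 / 2) * ∑ j, pd j (fun z => (S' z i j - S z i j) * p' z) y
            - (b' y i - b y i) * p' y := funext (key i)
    have hd1 : ∀ j : Fin d,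
        DifferentiableAt ℝ (fun y => pd j (fun z => (S' z i j - S z i j) * p' z) y) x :=
      fun j => ((contDiff_pd' (hDp i j) j).differentiable one_ne_zero) x
    have hsumd : DifferentiableAt ℝ
        (fun y => ∑ j, pd j (fun z => (S' z i j - S z i j) * p' z) y) x :=
      DifferentiableAt.fun_sum fun j _ => hd1 j
    have hF2 : DifferentiableAt ℝ (fun y => (b' y i - b y i) * p' y) x :=
      ((((hb' i).sub (hb i)).differentiable one_ne_zero).mul hp1) x
    rw [hfe, pd_sub' i (hsumd.const_mul _) hF2, pd_const_mul' i _ hsumd, pd_sum' i hd1]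
  -- split second-order terms
  have hsecond : ∀ i j : Fin d,
      pd i (fun y => pd j (fun z => (S' z i j - S z i j) * p' z) y) x
        = pd i (fun y => pd j (fun z => S' z i j * p' z) y) x
          - pd i (fun y => pd j (fun z => S z i j * p' z) y) x := by
    intro i j
    have hfun : (fun y => pd j (fun z => (S' z i j - S z i j) * p' z) y)
        = fun y => pd j (fun z => S' z i j * p' z) y
            - pd j (fun z => S z i j * p' z) y := by
      funext y
      have h1 : (fun z => (S' z i j - S z i j) * p' z)
          = fun z => S' z i j * p' z - S z i j * p' z := by
        funext z; ring
      rw [h1, pd_sub' j (((hS'p i j).differentiable two_ne_zero) y)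
        (((hSp i j).differentiable two_ne_zero) y)]
    rw [hfun, pd_sub' i (((contDiff_pd' (hS'p i j) j).differentiable one_ne_zero) x)
      (((contDiff_pd' (hSp i j) j).differentiable one_ne_zero) x)]
  -- split first-order terms
  have hfirst : ∀ i : Fin d,
      pd i (fun y => (b' y i - b y i) * p' y) x
        = pd i (fun y => b' y i * p' y) x - pd i (fun y => b y i * p' y) x := by
    intro i
    have h1 : (fun y => (b' y i - b y i) * p' y)
        = fun y => b' y i * p' y - b y i * p' y := by
      funext y; ring
    rw [h1, pd_sub' i ((((hb' i).differentiable one_ne_zero).fun_mul hp1) x)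
      ((((hb i).differentiable one_ne_zero).fun_mul hp1) x)]
  rw [hdiv]
  simp only [hsecond, hfirst, FPop, Finset.sum_sub_distrib, ← Finset.mul_sum]
  ring

end
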